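/- Let q be prime, n ≥ 1, and suppose r := (q−1)n − d, Δ, e, d satisfy the hypotheses of the robust soundness theorem for one multiplier (q^{εr} ≤ Δ ≤ q^{r/4(q−1)−2}, δr ≤ e ≤ r/8). If f : F_q^n → F_q and P ∈ P_q(n,e) are such that f·P is Δ'-close to some F ∈ P_q(n,d+e), then for P' uniform in P_q(n,e), the probability that f·P·P' ∈ P_q(n,d+2e) is at least q^{−Δ'}. -/
import Mathlib


open MvPolynomial

/-- Total degree of a monomial (exponent vector). -/
def mdeg {n : ℕ} (m : Fin n →₀ ℕ) : ℕ := ∑ i, m i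

/-- A polynomial is reduced if all individual degrees are at most `q - 1`
(the canonical representative in `P_q(n) = F_q[X]/(X_i^q - X_i)`). -/
def RMReduced {n q : ℕ} (p : MvPolynomial (Fin n) (ZMod q)) : Prop :=
  ∀ m ∈ p.support, ∀ i, m i ≤ q - 1

/-- Membership in `P_q(n,e)`: reduced and total degree at most `e`. -/
def InP (q n e : ℕ) (p : MvPolynomial (Fin n) (ZMod q)) : Prop :=
  RMReduced p ∧ p.totalDegree ≤ e

/-- `h` is the product of `f` and `g` in `P_q(n)`: it is the reduced polynomial
representing the pointwise product of the functions represented by `f` and `g`. -/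
def RedProd {n q : ℕ} (f g h : MvPolynomial (Fin n) (ZMod q)) : Prop :=
  RMReduced h ∧ ∀ x : Fin n → ZMod q, eval x h = eval x f * eval x g

/-- Reduced exponent: `a` mod the relation `x^q = x`. -/
def redExp (q a : ℕ) : ℕ := if a = 0 then 0 else (a - 1) % (q - 1) + 1

lemma redExp_le {q : ℕ} (hq : 2 ≤ q) (a : ℕ) : redExp q a ≤ q - 1 := by
  unfold redExp
  split
  · omega
  · have : (a - 1) % (q - 1) < q - 1 := Nat.mod_lt _ (by omega)
    omega

lemma redExp_le_self (q a : ℕ) : redExp q a ≤ a := by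
  unfold redExp
  split
  · omega
  · have : (a - 1) % (q - 1) ≤ a - 1 := Nat.mod_le _ _
    omega

lemma pow_redExp {q : ℕ} (hq : q.Prime) (x : ZMod q) (a : ℕ) :
    x ^ redExp q a = x ^ a := by
  haveI : Fact q.Prime := ⟨hq⟩
  have hq2 := hq.two_le
  rcases Nat.eq_zero_or_pos a with rfl | ha
  · simp [redExp]
  rw [redExp, if_neg (by omega)]
  have key : (q - 1) * ((a - 1) / (q - 1)) + ((a - 1) % (q - 1)) + 1 = a := by
    rw [Nat.div_add_mod, Nat.sub_add_cancel ha]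
  rcases eq_or_ne x 0 with rfl | hx
  · rw [zero_pow (by omega), zero_pow (by omega : a ≠ 0)]
  · conv_rhs => rw [← key, add_assoc, pow_add, pow_mul,
      ZMod.pow_card_sub_one_eq_one hx, one_pow, one_mul]

/-- Reduced monomial. -/
noncomputable def redMon (q : ℕ) {n : ℕ} (m : Fin n →₀ ℕ) : Fin n →₀ ℕ :=
  Finsupp.mapRange (redExp q) (by simp [redExp]) m

/-- Every polynomial has a reduced representative with no larger total degree. -/
lemma reduce_exists {n q : ℕ} (hq : q.Prime) (p : MvPolynomial (Fin n) (ZMod q)) :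
    ∃ G : MvPolynomial (Fin n) (ZMod q), RMReduced G ∧ G.totalDegree ≤ p.totalDegree ∧
      ∀ x, eval x G = eval x p := by
  classical
  refine ⟨∑ m ∈ p.support, monomial (redMon q m) (coeff m p), ?_, ?_, ?_⟩
  · intro m' hm' i
    have h0 := MvPolynomial.mem_support_iff.mp hm'
    rw [MvPolynomial.coeff_sum] at h0
    obtain ⟨m, hm, hne⟩ := Finset.exists_ne_zero_of_sum_ne_zero h0
    rw [MvPolynomial.coeff_monomial] at hne
    have heq : redMon q m = m' := by
      by_contra h
      simp [h] at hne
    subst heq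
    have : redMon q m i = redExp q (m i) := Finsupp.mapRange_apply
    rw [this]
    exact redExp_le hq.two_le _
  · refine le_trans (MvPolynomial.totalDegree_finset_sum _ _) (Finset.sup_le ?_)
    intro m hm
    refine le_trans (MvPolynomial.totalDegree_monomial_le _ _) ?_
    refine le_trans ?_ (MvPolynomial.le_totalDegree hm)
    rw [Finsupp.sum_fintype _ _ (fun i => rfl), Finsupp.sum_fintype _ _ (fun i => rfl)]
    refine Finset.sum_le_sum fun i _ => ?_
    show redMon q m i ≤ m i
    rw [show redMon q m i = redExp q (m i) from Finsupp.mapRange_apply]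
    exact redExp_le_self _ _
  · intro x
    rw [map_sum]
    conv_rhs => rw [p.as_sum, map_sum]
    refine Finset.sum_congr rfl fun m hm => ?_
    rw [eval_monomial, eval_monomial]
    congr 1
    rw [Finsupp.prod_fintype _ _ (fun i => pow_zero _),
        Finsupp.prod_fintype _ _ (fun i => pow_zero _)]
    refine Finset.prod_congr rfl fun i _ => ?_
    rw [show redMon q m i = redExp q (m i) from Finsupp.mapRange_apply]
    exact pow_redExp hq (x i) (m i)

/-- The space `P_q(n,e)` is finite. -/
lemma finite_inP (q n e : ℕ) (hq2 : 2 ≤ q) :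
    Finite {P' : MvPolynomial (Fin n) (ZMod q) // InP q n e P'} := by
  classical
  haveI : NeZero q := ⟨by omega⟩
  let emb : {P' : MvPolynomial (Fin n) (ZMod q) // InP q n e P'} → ((Fin n → Fin q) → ZMod q) :=
    fun P' g => coeff (Finsupp.equivFunOnFinite.symm fun i => (g i : ℕ)) P'.val
  have hinj : Function.Injective emb := by
    intro P₁ P₂ h
    apply Subtype.ext
    apply MvPolynomial.ext
    intro m
    by_cases hm : ∀ i, m i ≤ q - 1
    · have hlt : ∀ i, m i < q := fun i => by have := hm i; omega
      have h2 := congrFun h (fun i => (⟨m i, hlt i⟩ : Fin q))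
      simpa [emb, Finsupp.equivFunOnFinite.symm_apply_apply m] using h2
    · push_neg at hm
      obtain ⟨i, hi⟩ := hm
      have h1 : coeff m P₁.val = 0 := by
        by_contra hc
        have := P₁.prop.1 m (MvPolynomial.mem_support_iff.mpr hc) i
        omega
      have h2 : coeff m P₂.val = 0 := by
        by_contra hc
        have := P₂.prop.1 m (MvPolynomial.mem_support_iff.mpr hc) i
        omega
      rw [h1, h2]
  exact Finite.of_injective emb hinj

lemma inP_sub {q n e : ℕ} {p p' : MvPolynomial (Fin n) (ZMod q)}
    (h : InP q n e p) (h' : InP q n e p') : InP q n e (p - p') := by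
  constructor
  · intro m hm i
    rcases Finset.mem_union.mp (MvPolynomial.support_sub (Fin n) p p' hm) with h1 | h1
    exacts [h.1 m h1 i, h'.1 m h1 i]
  · exact le_trans (MvPolynomial.totalDegree_sub p p') (max_le h.2 h'.2)

theorem stmt15 (q n d r e Δ Δ' : ℕ) (hq : q.Prime) (ε δ : ℝ)
    (hε0 : 0 < ε) (hε1 : ε < 1) (hδ0 : 0 < δ) (hδ1 : δ < 1)
    (hr : d + r = (q - 1) * n)
    (hΔl : (q : ℝ) ^ (ε * r) ≤ (Δ : ℝ))
    (hΔu : (Δ : ℝ) ≤ (q : ℝ) ^ ((r : ℝ) / (4 * ((q : ℝ) - 1)) - 2))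
    (hel : δ * (r : ℝ) ≤ (e : ℝ)) (heu : (e : ℝ) ≤ (r : ℝ) / 8)
    (f : (Fin n → ZMod q) → ZMod q)
    (P : MvPolynomial (Fin n) (ZMod q)) (hP : InP q n e P)
    (F : MvPolynomial (Fin n) (ZMod q)) (hF : InP q n (d + e) F)
    (hclose : Nat.card {x : Fin n → ZMod q // f x * eval x P ≠ eval x F} ≤ Δ') :
    Nat.card {P' : MvPolynomial (Fin n) (ZMod q) // InP q n e P'}
      ≤ Nat.card {P' : MvPolynomial (Fin n) (ZMod q) // InP q n e P' ∧
          ∃ G : MvPolynomial (Fin n) (ZMod q), InP q n (d + 2 * e) G ∧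
            ∀ x, f x * eval x P * eval x P' = eval x G}
        * q ^ Δ' := by
  classical
  haveI : Fact q.Prime := ⟨hq⟩
  haveI : NeZero q := ⟨hq.pos.ne'⟩
  have hq2 := hq.two_le
  haveI hfinS : Finite {P' : MvPolynomial (Fin n) (ZMod q) // InP q n e P'} :=
    finite_inP q n e hq2
  -- the "disagreement set" as a type
  set Dt := {x : Fin n → ZMod q // f x * eval x P ≠ eval x F} with hDt
  -- polynomials in P_q(n,e) vanishing on D
  let ZP : MvPolynomial (Fin n) (ZMod q) → Prop := fun P' =>
    InP q n e P' ∧ ∀ x : Fin n → ZMod q, f x * eval x P ≠ eval x F → eval x P' = 0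
  -- the "good" polynomials
  let GP : MvPolynomial (Fin n) (ZMod q) → Prop := fun P' =>
    InP q n e P' ∧ ∃ G : MvPolynomial (Fin n) (ZMod q), InP q n (d + 2 * e) G ∧
      ∀ x, f x * eval x P * eval x P' = eval x G
  haveI hfinZ : Finite {P' // ZP P'} :=
    Finite.of_injective
      (fun z => (⟨z.val, z.prop.1⟩ : {P' : MvPolynomial (Fin n) (ZMod q) // InP q n e P'}))
      (fun a b h => Subtype.ext (Subtype.mk_eq_mk.mp h))
  haveI hfinG : Finite {P' // GP P'} :=
    Finite.of_injective
      (fun z => (⟨z.val, z.prop.1⟩ : {P' : MvPolynomial (Fin n) (ZMod q) // InP q n e P'}))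
      (fun a b h => Subtype.ext (Subtype.mk_eq_mk.mp h))
  -- evaluation map on D
  let ψ : MvPolynomial (Fin n) (ZMod q) → (Dt → ZMod q) := fun P' x => eval x.val P'
  -- choose representatives of fibers of ψ
  let rep : (Dt → ZMod q) → MvPolynomial (Fin n) (ZMod q) := fun v =>
    if h : ∃ P₀ : {P' : MvPolynomial (Fin n) (ZMod q) // InP q n e P'}, ψ P₀.val = v then
      h.choose.val else 0
  have rep_spec : ∀ v (h : ∃ P₀ : {P' : MvPolynomial (Fin n) (ZMod q) // InP q n e P'},
      ψ P₀.val = v), InP q n e (rep v) ∧ ψ (rep v) = v := by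
    intro v h
    simp only [rep, dif_pos h]
    exact ⟨h.choose.prop, h.choose_spec⟩
  -- the injection S → (D → F_q) × Z
  have hstep1 : Nat.card {P' : MvPolynomial (Fin n) (ZMod q) // InP q n e P'}
      ≤ Nat.card ((Dt → ZMod q) × {P' // ZP P'}) := by
    refine Nat.card_le_card_of_injective
      (fun P' => (ψ P'.val, ⟨P'.val - rep (ψ P'.val), ?_, ?_⟩)) ?_
    · exact inP_sub P'.prop (rep_spec _ ⟨P', rfl⟩).1
    · intro x hx
      have h2 : ψ (rep (ψ P'.val)) = ψ P'.val := (rep_spec _ ⟨P', rfl⟩).2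
      have h3 : eval x (rep (ψ P'.val)) = eval x P'.val := congrFun h2 ⟨x, hx⟩
      rw [map_sub, h3, sub_self]
    · intro P₁ P₂ h
      have h1 : ψ P₁.val = ψ P₂.val := congrArg Prod.fst h
      have h2 : P₁.val - rep (ψ P₁.val) = P₂.val - rep (ψ P₂.val) :=
        congrArg Subtype.val (congrArg Prod.snd h)
      rw [h1] at h2
      exact Subtype.ext (by have := sub_left_injective h2; exact this)
  -- counting the product
  have hcard1 : Nat.card ((Dt → ZMod q) × {P' // ZP P'})
      = q ^ Nat.card Dt * Nat.card {P' // ZP P'} := by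
    rw [Nat.card_prod, Nat.card_fun, Nat.card_zmod]
  -- Z injects into Good
  have hstep3 : Nat.card {P' // ZP P'} ≤ Nat.card {P' // GP P'} := by
    refine Nat.card_le_card_of_injective (fun z => ⟨z.val, z.prop.1, ?_⟩) ?_
    · obtain ⟨G, hGred, hGdeg, hGeval⟩ := reduce_exists hq (F * z.val)
      refine ⟨G, ⟨hGred, ?_⟩, ?_⟩
      · refine le_trans hGdeg (le_trans (MvPolynomial.totalDegree_mul F z.val) ?_)
        have := hF.2
        have := z.prop.1.2
        omega
      · intro x
        rw [hGeval, map_mul]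
        by_cases hx : f x * eval x P = eval x F
        · rw [hx]
        · rw [z.prop.2 x hx, mul_zero, mul_zero]
    · intro a b h
      exact Subtype.ext (Subtype.mk_eq_mk.mp h)
  calc Nat.card {P' : MvPolynomial (Fin n) (ZMod q) // InP q n e P'}
      ≤ q ^ Nat.card Dt * Nat.card {P' // ZP P'} := by rw [← hcard1]; exact hstep1
    _ ≤ q ^ Δ' * Nat.card {P' // GP P'} :=
        Nat.mul_le_mul (Nat.pow_le_pow_right hq.pos hclose) hstep3
    _ = Nat.card {P' // GP P'} * q ^ Δ' := mul_comm _ _
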